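/- Let I ⊆ ℝ be a nonempty open interval (i.e., a nonempty open connected subset of ℝ, possibly unbounded), and let ψ : I → I be continuous and injective. Then the following are equivalent: (1) ψ has no fixed points (ψ(x) ≠ x for all x ∈ I); (2) ψ is run-away on I; (3) ψ is strongly run-away on I. -/
import Mathlib

open Set Filter Topology

/-- Escape lemma: if every point moves strictly up, then every compact set is eventually
mapped entirely above its own maximum. -/
lemma escape_aux {α : Type*} [ConditionallyCompleteLinearOrder α] [TopologicalSpace α]
    [OrderTopology α] {I : Set α} (hconn : I.OrdConnected) (ψ : ↥I → ↥I)
    (hcont : Continuous ψ) (hgt : ∀ x : ↥I, (x : α) < (ψ x : α)) {K : Set ↥I}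
    (hK : IsCompact K) : ∃ N : ℕ, ∀ n, N ≤ n → (ψ^[n] '' K) ∩ K = ∅ := by
  rcases K.eq_empty_or_nonempty with rfl | hKne
  · exact ⟨0, fun n _ => by simp⟩
  obtain ⟨b, hbK, hb⟩ := hK.exists_isMaxOn hKne continuous_subtype_val.continuousOn
  have hmono : ∀ x : ↥I, Monotone fun n => (ψ^[n] x : α) := by
    intro x
    apply monotone_nat_of_le_succ
    intro n
    have := hgt (ψ^[n] x)
    simpa [Function.iterate_succ_apply'] using this.le
  have hiter_cont : ∀ n : ℕ, Continuous fun x : ↥I => (ψ^[n] x : α) :=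
    fun n => continuous_subtype_val.comp (hcont.iterate n)
  have hesc : ∀ x : ↥I, ∃ n, (b : α) < (ψ^[n] x : α) := by
    intro x
    by_contra h
    push_neg at h
    set f : ℕ → α := fun n => (ψ^[n] x : α) with hf
    have hbdd : BddAbove (Set.range f) := ⟨b, by rintro _ ⟨n, rfl⟩; exact h n⟩
    set L : α := ⨆ n, f n with hL
    have htend : Tendsto f atTop (𝓝 L) := tendsto_atTop_ciSup (hmono x) hbdd
    have hL_mem : L ∈ I := by
      have h1 : f 0 ≤ L := le_ciSup hbdd 0
      have h2 : L ≤ (b : α) := ciSup_le h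
      exact hconn.out x.2 b.2 ⟨by simpa [hf] using h1, h2⟩
    set L' : ↥I := ⟨L, hL_mem⟩
    have htend' : Tendsto (fun n => ψ^[n] x) atTop (𝓝 L') := by
      rw [Topology.IsEmbedding.subtypeVal.tendsto_nhds_iff]
      exact htend
    have h3 : Tendsto (fun n => ψ^[n + 1] x) atTop (𝓝 (ψ L')) := by
      have := (hcont.tendsto L').comp htend'
      simpa [Function.comp_def, Function.iterate_succ_apply'] using this
    have h4 : Tendsto (fun n => ψ^[n + 1] x) atTop (𝓝 L') :=
      htend'.comp (tendsto_add_atTop_nat 1)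
    have hfix : ψ L' = L' := tendsto_nhds_unique h3 h4
    have h5 := hgt L'
    rw [hfix] at h5
    exact lt_irrefl _ h5
  set U : ℕ → Set ↥I := fun n => {x | (b : α) < (ψ^[n] x : α)} with hU
  have hUopen : ∀ n, IsOpen (U n) := fun n => isOpen_lt continuous_const (hiter_cont n)
  have hUmono : Monotone U := by
    intro m n hmn x hx
    exact lt_of_lt_of_le hx (hmono x hmn)
  have hcover : K ⊆ ⋃ n, U n := fun x _ => Set.mem_iUnion.mpr (hesc x)
  obtain ⟨t, ht⟩ := hK.elim_finite_subcover U hUopen hcover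
  refine ⟨t.sup id, fun n hn => ?_⟩
  rw [Set.eq_empty_iff_forall_notMem]
  rintro y ⟨⟨x, hxK, rfl⟩, hyK⟩
  have hxU : x ∈ U (t.sup id) := by
    obtain ⟨m, hmt, hm⟩ := Set.mem_iUnion₂.mp (ht hxK)
    exact hUmono (Finset.le_sup (f := id) hmt) hm
  have h1 : (b : α) < (ψ^[n] x : α) := lt_of_lt_of_le hxU (hmono x hn)
  exact absurd (hb hyK) (not_le.mpr h1)

/-- For a continuous injective self-map of a nonempty open interval, having no fixed
points, being run-away, and being strongly run-away are equivalent. -/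
theorem stmt_12 (I : Set ℝ) (hI : IsOpen I) (hne : I.Nonempty) (hconn : IsPreconnected I)
    (ψ : ↥I → ↥I) (hcont : Continuous ψ) (hinj : Function.Injective ψ) :
    List.TFAE [
      ∀ x : ↥I, ψ x ≠ x,
      ∀ K : Set ↥I, IsCompact K → ∃ n : ℕ, 1 ≤ n ∧ (ψ^[n] '' K) ∩ K = ∅,
      ∀ K : Set ↥I, IsCompact K → ∃ N : ℕ, ∀ n, N ≤ n → (ψ^[n] '' K) ∩ K = ∅ ] := by
  tfae_have 1 → 3 := by
    intro h1 K hK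
    have hconn' : I.OrdConnected := hconn.ordConnected
    have hpre : PreconnectedSpace ↥I := Subtype.preconnectedSpace hconn
    have gcont : Continuous fun z : ↥I => (ψ z : ℝ) - z :=
      (continuous_subtype_val.comp hcont).sub continuous_subtype_val
    by_cases hc : ∃ x : ↥I, (ψ x : ℝ) < (x : ℝ)
    · obtain ⟨x₀, hx₀⟩ := hc
      have hall : ∀ x : ↥I, (ψ x : ℝ) < (x : ℝ) := by
        intro y
        rcases lt_trichotomy ((ψ y : ℝ)) (y : ℝ) with h | h | h
        · exact h
        · exact absurd (Subtype.ext h) (h1 y)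
        · have hIcc := intermediate_value_univ x₀ y gcont
          have h0 : (0 : ℝ) ∈ Set.Icc ((ψ x₀ : ℝ) - x₀) ((ψ y : ℝ) - y) :=
            ⟨by linarith, by linarith⟩
          obtain ⟨z, hz⟩ := hIcc h0
          have hz' : (ψ z : ℝ) = z := by
            have : (ψ z : ℝ) - z = 0 := hz
            linarith
          exact absurd (Subtype.ext hz') (h1 z)
      exact escape_aux (α := ℝᵒᵈ) hconn'.dual ψ hcont hall hK
    · push_neg at hc
      have hall : ∀ x : ↥I, (x : ℝ) < (ψ x : ℝ) := by
        intro y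
        rcases lt_or_eq_of_le (hc y) with h | h
        · exact h
        · exact absurd (Subtype.ext h.symm) (h1 y)
      exact escape_aux hconn' ψ hcont hall hK
  tfae_have 3 → 2 := by
    intro h3 K hK
    obtain ⟨N, hN⟩ := h3 K hK
    exact ⟨N + 1, Nat.le_add_left 1 N, hN (N + 1) (Nat.le_succ N)⟩
  tfae_have 2 → 1 := by
    intro h2 x hfix
    obtain ⟨n, hn1, hn⟩ := h2 {x} isCompact_singleton
    have hit : ψ^[n] x = x := Function.iterate_fixed hfix n
    have hx : x ∈ (ψ^[n] '' {x}) ∩ {x} := ⟨⟨x, rfl, hit⟩, rfl⟩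
    rw [hn] at hx
    exact hx
  tfae_finish
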